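/- Let H : (ℝ → ℝ) → (ℝ → ℝ) map measurable functions to measurable functions, be causal, and be finite-gain stable with gain h ≥ 0. Let u₁ ∈ L²([0,∞)) and let u₂ be a power signal. Then limsup_{T→∞} (1/T)∫₀ᵀ ((H(u₁+u₂))(t))² dt ≤ h² · limsup_{T→∞} (1/T)∫₀ᵀ u₂(t)² dt; that is, ‖H(u₁+u₂)‖_P ≤ h‖u₂‖_P. -/

import Mathlib

open MeasureTheory Filter
open scoped ENNReal

/-- Power of a signal: `limsup_{T→∞} (1/T) ∫₀ᵀ u(t)² dt`, in `[0, ∞]`. -/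
noncomputable def powerSq (u : ℝ → ℝ) : ℝ≥0∞ :=
  Filter.limsup (fun T : ℝ => ENNReal.ofReal ((1 / T) * ∫ t in Set.Ioc (0 : ℝ) T, (u t) ^ 2))
    Filter.atTop

/-- The truncation `u_T`: equal to `u` on `[0, T]` and `0` elsewhere. -/
noncomputable def trunc (u : ℝ → ℝ) (T : ℝ) : ℝ → ℝ := fun t => if 0 ≤ t ∧ t ≤ T then u t else 0

/-- `H` is causal: for every input `u` and every `T > 0`, `(H u)(t) = (H u_T)(t)` for
almost every `t ∈ [0, T]`. -/
def Causal (H : (ℝ → ℝ) → ℝ → ℝ) : Prop :=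
  ∀ u : ℝ → ℝ, ∀ T : ℝ, 0 < T →
    ∀ᵐ t ∂(volume.restrict (Set.Icc (0 : ℝ) T)), H u t = H (trunc u T) t

/-- Membership of `L²([0,∞))`. -/
def MemL2pos (u : ℝ → ℝ) : Prop := MemLp u 2 (volume.restrict (Set.Ici (0 : ℝ)))

/-- `H` is finite-gain stable with gain `h`. -/
def FGS (H : (ℝ → ℝ) → ℝ → ℝ) (h : ℝ) : Prop :=
  ∀ u : ℝ → ℝ, MemL2pos u → MemL2pos (H u) ∧
    eLpNorm (H u) 2 (volume.restrict (Set.Ici (0 : ℝ))) ≤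
      ENNReal.ofReal h * eLpNorm u 2 (volume.restrict (Set.Ici (0 : ℝ)))

/-- If `H` is causal and finite-gain stable with gain `h`, `u₁ ∈ L²([0,∞))` and `u₂` is a
power signal, then `‖H(u₁ + u₂)‖_P² ≤ h² ‖u₂‖_P²`: adding small power noise `u₂` to an
`L²` input yields small power output. -/
lemma ofReal_integral_sq_eq {μ : Measure ℝ} {f : ℝ → ℝ} (hf : MemLp f 2 μ) :
    ENNReal.ofReal (∫ t, f t ^ 2 ∂μ) = (eLpNorm f 2 μ) ^ 2 := by
  rw [MeasureTheory.ofReal_integral_eq_lintegral_ofReal hf.integrable_sq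
      (Filter.Eventually.of_forall fun t => sq_nonneg _),
    eLpNorm_eq_lintegral_rpow_enorm_toReal (by norm_num) (by norm_num),
    ← ENNReal.rpow_natCast _ 2, ← ENNReal.rpow_mul]
  norm_num
  refine lintegral_congr fun t => ?_
  rw [← sq_abs, ENNReal.ofReal_pow (abs_nonneg _), ← Real.norm_eq_abs,
    ofReal_norm_eq_enorm]

theorem power_of_L2_plus_power_input (H : (ℝ → ℝ) → ℝ → ℝ)
    (hmeas : ∀ u : ℝ → ℝ, Measurable u → Measurable (H u))
    (hcausal : Causal H) (h : ℝ) (hh : 0 ≤ h) (hfgs : FGS H h)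
    (u₁ u₂ : ℝ → ℝ) (hu₁ : Measurable u₁) (hu₂ : Measurable u₂)
    (hu₁supp : ∀ t : ℝ, t < 0 → u₁ t = 0) (hu₂supp : ∀ t : ℝ, t < 0 → u₂ t = 0)
    (hu₁L2 : MemL2pos u₁)
    (hu₂loc : ∀ T : ℝ, 0 < T → IntegrableOn (fun t => (u₂ t) ^ 2) (Set.Ioc 0 T))
    (hu₂pow : powerSq u₂ < ⊤) :
    powerSq (H (fun t => u₁ t + u₂ t)) ≤ ENNReal.ofReal (h ^ 2) * powerSq u₂ := by
  set v : ℝ → ℝ := fun t => u₁ t + u₂ t with hv_def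
  set A' : ℝ≥0∞ := eLpNorm u₁ 2 (volume.restrict (Set.Ici (0 : ℝ))) with hA'_def
  set B' : ℝ → ℝ≥0∞ := fun T => eLpNorm u₂ 2 (volume.restrict (Set.Ioc (0 : ℝ) T)) with hB'_def
  set A : ℝ := A'.toReal with hA_def
  have hA'_ne : A' ≠ ⊤ := hu₁L2.eLpNorm_ne_top
  set P : ℝ≥0∞ := powerSq u₂ with hP_def
  have hP_ne : P ≠ ⊤ := hu₂pow.ne
  set P' : ℝ := P.toReal with hP'_def
  -- per-T facts
  have main : ∀ T : ℝ, 0 < T →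
      (∫ t in Set.Ioc (0 : ℝ) T, (H v t) ^ 2) ≤ h ^ 2 * (A + (B' T).toReal) ^ 2 ∧
      (∫ t in Set.Ioc (0 : ℝ) T, (u₂ t) ^ 2) = ((B' T).toReal) ^ 2 := by
    intro T hT
    have hrIcc_eq : volume.restrict (Set.Ioc (0 : ℝ) T) = volume.restrict (Set.Icc 0 T) :=
      Measure.restrict_congr_set Ioc_ae_eq_Icc
    have hIccIci : Set.Icc (0 : ℝ) T ⊆ Set.Ici 0 := fun x hx => hx.1
    have hresle : volume.restrict (Set.Icc (0 : ℝ) T) ≤ volume.restrict (Set.Ici 0) :=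
      Measure.restrict_mono hIccIci le_rfl
    have hu1Icc : MemLp u₁ 2 (volume.restrict (Set.Icc (0 : ℝ) T)) :=
      hu₁L2.mono_measure hresle
    have hu2Ioc : MemLp u₂ 2 (volume.restrict (Set.Ioc (0 : ℝ) T)) :=
      (memLp_two_iff_integrable_sq hu₂.aestronglyMeasurable).mpr (hu₂loc T hT)
    have hB'_ne : B' T ≠ ⊤ := hu2Ioc.eLpNorm_ne_top
    have hu2Icc : MemLp u₂ 2 (volume.restrict (Set.Icc (0 : ℝ) T)) := by
      rw [← hrIcc_eq]; exact hu2Ioc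
    have hvIcc : MemLp v 2 (volume.restrict (Set.Icc (0 : ℝ) T)) := hu1Icc.add hu2Icc
    have trunc_eq : trunc v T = (Set.Icc (0 : ℝ) T).indicator v := by
      funext t; simp [trunc, Set.indicator_apply, Set.mem_Icc]
    have hw_mem : MemL2pos (trunc v T) := by
      unfold MemL2pos
      rw [trunc_eq, memLp_indicator_iff_restrict measurableSet_Icc,
        Measure.restrict_restrict measurableSet_Icc, Set.inter_eq_left.mpr hIccIci]
      exact hvIcc
    obtain ⟨hHw_mem, hHw_le⟩ := hfgs _ hw_mem
    have hw_norm : eLpNorm (trunc v T) 2 (volume.restrict (Set.Ici (0 : ℝ))) =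
        eLpNorm v 2 (volume.restrict (Set.Icc (0 : ℝ) T)) := by
      rw [trunc_eq, eLpNorm_indicator_eq_eLpNorm_restrict measurableSet_Icc,
        Measure.restrict_restrict measurableSet_Icc, Set.inter_eq_left.mpr hIccIci]
    have hvnorm_le : eLpNorm v 2 (volume.restrict (Set.Icc (0 : ℝ) T)) ≤ A' + B' T := by
      have h1 : eLpNorm v 2 (volume.restrict (Set.Icc (0 : ℝ) T)) ≤
          eLpNorm u₁ 2 (volume.restrict (Set.Icc (0 : ℝ) T)) +
          eLpNorm u₂ 2 (volume.restrict (Set.Icc (0 : ℝ) T)) :=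
        eLpNorm_add_le hu₁.aestronglyMeasurable hu₂.aestronglyMeasurable (by norm_num)
      refine h1.trans (add_le_add (eLpNorm_mono_measure _ hresle) (le_of_eq ?_))
      show eLpNorm u₂ 2 (volume.restrict (Set.Icc (0:ℝ) T)) =
        eLpNorm u₂ 2 (volume.restrict (Set.Ioc (0:ℝ) T))
      rw [hrIcc_eq]
    have hHwIcc : MemLp (H (trunc v T)) 2 (volume.restrict (Set.Icc (0 : ℝ) T)) :=
      hHw_mem.mono_measure hresle
    have hInt_eq : (∫ t in Set.Ioc (0 : ℝ) T, (H v t) ^ 2) =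
        ∫ t in Set.Icc (0 : ℝ) T, (H (trunc v T) t) ^ 2 := by
      rw [hrIcc_eq]
      exact integral_congr_ae ((hcausal v T hT).mono fun t ht => by dsimp only; rw [ht])
    have key : ENNReal.ofReal (∫ t in Set.Ioc (0 : ℝ) T, (H v t) ^ 2) ≤
        (ENNReal.ofReal h) ^ 2 * (A' + B' T) ^ 2 := by
      rw [hInt_eq, ofReal_integral_sq_eq hHwIcc]
      calc (eLpNorm (H (trunc v T)) 2 (volume.restrict (Set.Icc (0 : ℝ) T))) ^ 2
          ≤ (eLpNorm (H (trunc v T)) 2 (volume.restrict (Set.Ici (0 : ℝ)))) ^ 2 :=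
            pow_le_pow_left₀ zero_le (eLpNorm_mono_measure _ hresle) 2
        _ ≤ (ENNReal.ofReal h * eLpNorm (trunc v T) 2 (volume.restrict (Set.Ici (0 : ℝ)))) ^ 2 :=
            pow_le_pow_left₀ zero_le hHw_le 2
        _ = (ENNReal.ofReal h) ^ 2 *
              (eLpNorm v 2 (volume.restrict (Set.Icc (0 : ℝ) T))) ^ 2 := by
            rw [mul_pow, hw_norm]
        _ ≤ (ENNReal.ofReal h) ^ 2 * (A' + B' T) ^ 2 :=
            mul_le_mul_right (pow_le_pow_left₀ zero_le hvnorm_le 2) _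
    constructor
    · have hRfin : (ENNReal.ofReal h) ^ 2 * (A' + B' T) ^ 2 ≠ ⊤ := by
        apply ENNReal.mul_ne_top <;>
          simp [ENNReal.pow_ne_top, ENNReal.add_ne_top, hA'_ne, hB'_ne, ENNReal.ofReal_ne_top]
      have hLHS_nonneg : (0 : ℝ) ≤ ∫ t in Set.Ioc (0 : ℝ) T, (H v t) ^ 2 :=
        integral_nonneg fun t => sq_nonneg _
      have := ENNReal.toReal_mono hRfin key
      rwa [ENNReal.toReal_ofReal hLHS_nonneg, ENNReal.toReal_mul, ENNReal.toReal_pow,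
        ENNReal.toReal_pow, ENNReal.toReal_ofReal hh,
        ENNReal.toReal_add hA'_ne hB'_ne] at this
    · have h2 := ofReal_integral_sq_eq hu2Ioc
      have h3 := congrArg ENNReal.toReal h2
      rwa [ENNReal.toReal_ofReal (integral_nonneg fun t => sq_nonneg _),
        ENNReal.toReal_pow] at h3
  -- limsup stage
  refine ENNReal.le_of_forall_pos_le_add fun ε hε hfin => ?_
  -- choose δ
  have hP'_nonneg : 0 ≤ P' := ENNReal.toReal_nonneg
  have hcont : Filter.Tendsto (fun δ : ℝ => h ^ 2 * (δ + Real.sqrt (P' + δ)) ^ 2)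
      (nhdsWithin 0 (Set.Ioi 0)) (nhds (h ^ 2 * P')) := by
    have hc : Continuous fun δ : ℝ => h ^ 2 * (δ + Real.sqrt (P' + δ)) ^ 2 := by
      fun_prop
    have := (hc.tendsto 0).mono_left (nhdsWithin_le_nhds (s := Set.Ioi (0:ℝ)))
    simpa [Real.sq_sqrt hP'_nonneg] using this
  have hεpos : (0 : ℝ) < ε := hε
  obtain ⟨δ, hδ_le, hδpos⟩ :
      ∃ δ : ℝ, h ^ 2 * (δ + Real.sqrt (P' + δ)) ^ 2 ≤ h ^ 2 * P' + ε ∧ 0 < δ := by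
    have h1 : ∀ᶠ δ in nhdsWithin (0:ℝ) (Set.Ioi 0),
        h ^ 2 * (δ + Real.sqrt (P' + δ)) ^ 2 ≤ h ^ 2 * P' + ε :=
      hcont.eventually_le_const (by linarith)
    exact (h1.and self_mem_nhdsWithin).exists
  -- eventual facts
  have hsqrt_tendsto : Filter.Tendsto Real.sqrt atTop atTop :=
    (tendsto_rpow_atTop (by norm_num : (0:ℝ) < 1/2)).congr
      fun x => (Real.sqrt_eq_rpow x).symm
  have e2 : ∀ᶠ T : ℝ in atTop, A / Real.sqrt T ≤ δ := by
    have : Filter.Tendsto (fun T : ℝ => A / Real.sqrt T) atTop (nhds 0) :=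
      tendsto_const_nhds.div_atTop hsqrt_tendsto
    exact this.eventually_le_const hδpos
  have e3 : ∀ᶠ T : ℝ in atTop,
      ENNReal.ofReal ((1 / T) * ∫ t in Set.Ioc (0 : ℝ) T, (u₂ t) ^ 2) < P + ENNReal.ofReal δ := by
    exact eventually_lt_of_limsup_lt
      (ENNReal.lt_add_right hP_ne (ENNReal.ofReal_pos.mpr hδpos).ne')
  have e1 : ∀ᶠ T : ℝ in atTop, (1:ℝ) ≤ T := eventually_ge_atTop 1
  have ebound : ∀ᶠ T : ℝ in atTop,
      (fun T : ℝ => ENNReal.ofReal ((1 / T) * ∫ t in Set.Ioc (0 : ℝ) T, (H v t) ^ 2)) T ≤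
        ENNReal.ofReal (h ^ 2 * P' + ε) := by
    filter_upwards [e1, e2, e3] with T hT1 hT2 hT3
    have hT : (0:ℝ) < T := lt_of_lt_of_le one_pos hT1
    have hsT : (0:ℝ) < Real.sqrt T := Real.sqrt_pos.mpr hT
    obtain ⟨hkey, hB2⟩ := main T hT
    set B : ℝ := (B' T).toReal with hB_def
    have hB_nonneg : 0 ≤ B := ENNReal.toReal_nonneg
    have hg_nonneg : 0 ≤ (1 / T) * ∫ t in Set.Ioc (0 : ℝ) T, (u₂ t) ^ 2 :=
      mul_nonneg (by positivity) (integral_nonneg fun t => sq_nonneg _)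
    -- from e3 : real bound
    have hg_le : (1 / T) * (∫ t in Set.Ioc (0 : ℝ) T, (u₂ t) ^ 2) ≤ P' + δ := by
      have hfin' : P + ENNReal.ofReal δ ≠ ⊤ := by
        simp [ENNReal.add_ne_top, hP_ne, ENNReal.ofReal_ne_top]
      have := ENNReal.toReal_mono hfin' hT3.le
      rwa [ENNReal.toReal_ofReal hg_nonneg, ENNReal.toReal_add hP_ne ENNReal.ofReal_ne_top,
        ENNReal.toReal_ofReal hδpos.le] at this
    -- B/√T ≤ √(P'+δ)
    have hBsq : B / Real.sqrt T = Real.sqrt ((1 / T) * ∫ t in Set.Ioc (0 : ℝ) T, (u₂ t) ^ 2) := by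
      rw [hB2, one_div, inv_mul_eq_div, Real.sqrt_div (sq_nonneg B),
        Real.sqrt_sq hB_nonneg]
    have hB_le : B / Real.sqrt T ≤ Real.sqrt (P' + δ) := by
      rw [hBsq]; exact Real.sqrt_le_sqrt hg_le
    -- main real chain
    have hchain : (1 / T) * (∫ t in Set.Ioc (0 : ℝ) T, (H v t) ^ 2) ≤
        h ^ 2 * (δ + Real.sqrt (P' + δ)) ^ 2 := by
      have h1 : (1 / T) * (∫ t in Set.Ioc (0 : ℝ) T, (H v t) ^ 2) ≤
          (1 / T) * (h ^ 2 * (A + B) ^ 2) :=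
        mul_le_mul_of_nonneg_left hkey (by positivity)
      have h2 : (1 / T) * (h ^ 2 * (A + B) ^ 2) = h ^ 2 * (A / Real.sqrt T + B / Real.sqrt T) ^ 2 := by
        rw [← add_div, div_pow, Real.sq_sqrt hT.le]
        ring
      have h3 : h ^ 2 * (A / Real.sqrt T + B / Real.sqrt T) ^ 2 ≤
          h ^ 2 * (δ + Real.sqrt (P' + δ)) ^ 2 := by
        apply mul_le_mul_of_nonneg_left _ (sq_nonneg h)
        apply pow_le_pow_left₀ _ (add_le_add hT2 hB_le)
        have hA_nonneg : 0 ≤ A := ENNReal.toReal_nonneg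
        positivity
      calc _ ≤ (1 / T) * (h ^ 2 * (A + B) ^ 2) := h1
        _ = _ := h2
        _ ≤ _ := h3
    calc ENNReal.ofReal ((1 / T) * ∫ t in Set.Ioc (0 : ℝ) T, (H v t) ^ 2)
        ≤ ENNReal.ofReal (h ^ 2 * (δ + Real.sqrt (P' + δ)) ^ 2) :=
          ENNReal.ofReal_le_ofReal hchain
      _ ≤ ENNReal.ofReal (h ^ 2 * P' + ε) := ENNReal.ofReal_le_ofReal hδ_le
  have hlim : powerSq (H v) ≤ ENNReal.ofReal (h ^ 2 * P' + ε) :=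
    limsup_le_of_le (by isBoundedDefault) ebound
  refine hlim.trans ?_
  rw [ENNReal.ofReal_add (by positivity) hεpos.le, ENNReal.ofReal_mul (by positivity),
    ENNReal.ofReal_toReal hP_ne, ENNReal.ofReal_coe_nnreal]
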